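/- If vertices v,w,x,y span a diamond in a simple 3-regular graph (with edges vw, vx, wx, wy, xy present and vy absent), and the third neighbours a of v and b of y are distinct with ab not an edge, then deleting edges av and by and inserting edges vy and ab yields a simple 3-regular graph in which {v,w,x,y} induces a K_4 component. -/

import Mathlib

theorem stmt9 (n : ℕ) (G : SimpleGraph (Fin n))
    (hreg : ∀ u, (G.neighborSet u).ncard = 3)
    (v w x y a b : Fin n)
    (hvw : G.Adj v w) (hvx : G.Adj v x) (hwx : G.Adj w x)
    (hwy : G.Adj w y) (hxy : G.Adj x y) (hvy : ¬ G.Adj v y)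
    (hab : a ≠ b) (hnab : ¬ G.Adj a b)
    (hav : G.Adj v a) (ha : a ∉ ({v, w, x, y} : Set (Fin n)))
    (hby : G.Adj y b) (hb : b ∉ ({v, w, x, y} : Set (Fin n))) :
    (let G' := SimpleGraph.fromEdgeSet
        ((G.edgeSet \ {s(a,v), s(b,y)}) ∪ {s(v,y), s(a,b)});
      (∀ u, (G'.neighborSet u).ncard = 3) ∧
      ∀ u z : Fin n, u ∈ ({v, w, x, y} : Set (Fin n)) →
        (G'.Adj u z ↔ z ∈ ({v, w, x, y} : Set (Fin n)) ∧ z ≠ u)) := by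
  intro G'
  simp only [Set.mem_insert_iff, Set.mem_singleton_iff, not_or] at ha hb
  obtain ⟨hav', haw, hax, hay⟩ := ha
  obtain ⟨hbv, hbw, hbx, hby'⟩ := hb
  have key : ∀ u p q r : Fin n, p ≠ q → p ≠ r → q ≠ r →
      G.Adj u p → G.Adj u q → G.Adj u r → G.neighborSet u = {p, q, r} := by
    intro u p q r hpq hpr hqr hp hq hr
    symm
    apply Set.eq_of_subset_of_ncard_le
    · intro z hz
      simp only [Set.mem_insert_iff, Set.mem_singleton_iff] at hz
      rcases hz with rfl | rfl | rfl <;> assumption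
    · rw [hreg, Set.ncard_insert_of_notMem (by simp [hpq, hpr]),
        Set.ncard_pair hqr]
    · exact Set.toFinite _
  have Nv : G.neighborSet v = {w, x, a} :=
    key v w x a hwx.ne (fun h => haw h.symm) (fun h => hax h.symm) hvw hvx hav
  have Av : ∀ z, G.Adj v z ↔ (z = w ∨ z = x ∨ z = a) := by
    intro z
    rw [← SimpleGraph.mem_neighborSet, Nv]; simp
  have hvy' : v ≠ y := by
    rintro rfl
    rcases (Av b).1 hby with rfl | rfl | rfl
    · exact hbw rfl
    · exact hbx rfl
    · exact hab rfl
  have Ny : G.neighborSet y = {w, x, b} :=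
    key y w x b hwx.ne (fun h => hbw h.symm) (fun h => hbx h.symm) hwy.symm hxy.symm hby
  have Ay : ∀ z, G.Adj y z ↔ (z = w ∨ z = x ∨ z = b) := by
    intro z
    rw [← SimpleGraph.mem_neighborSet, Ny]; simp
  have Nw : G.neighborSet w = {v, x, y} :=
    key w v x y hvx.ne hvy' hxy.ne hvw.symm hwx hwy
  have Aw : ∀ z, G.Adj w z ↔ (z = v ∨ z = x ∨ z = y) := by
    intro z
    rw [← SimpleGraph.mem_neighborSet, Nw]; simp
  have Nx : G.neighborSet x = {v, w, y} :=
    key x v w y hvw.ne hvy' hwy.ne hvx.symm hwx.symm hxy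
  have Ax : ∀ z, G.Adj x z ↔ (z = v ∨ z = w ∨ z = y) := by
    intro z
    rw [← SimpleGraph.mem_neighborSet, Nx]; simp
  have hadj : ∀ u z : Fin n, G'.Adj u z ↔
      ((G.Adj u z ∧ ¬(u = a ∧ z = v) ∧ ¬(u = v ∧ z = a) ∧ ¬(u = b ∧ z = y) ∧ ¬(u = y ∧ z = b))
        ∨ ((u = v ∧ z = y) ∨ (u = y ∧ z = v))
        ∨ ((u = a ∧ z = b) ∨ (u = b ∧ z = a))) := by
    intro u z
    simp only [G', SimpleGraph.fromEdgeSet_adj, Set.mem_union, Set.mem_diff,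
      Set.mem_insert_iff, Set.mem_singleton_iff, SimpleGraph.mem_edgeSet,
      Sym2.eq_iff, not_or]
    constructor
    · rintro ⟨h | h, hne⟩
      · left; tauto
      · right; tauto
    · rintro (h | h)
      · exact ⟨Or.inl (by tauto), h.1.ne⟩
      · rcases h with (⟨rfl, rfl⟩ | ⟨rfl, rfl⟩) | (⟨rfl, rfl⟩ | ⟨rfl, rfl⟩)
        · exact ⟨Or.inr (by tauto), hvy'⟩
        · exact ⟨Or.inr (by tauto), hvy'.symm⟩
        · exact ⟨Or.inr (by tauto), hab⟩
        · exact ⟨Or.inr (by tauto), hab.symm⟩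
  have hyv : y ≠ v := hvy'.symm
  have hwv : w ≠ v := hvw.ne'
  have hxv : x ≠ v := hvx.ne'
  have hxw : x ≠ w := hwx.ne'
  have hyw : y ≠ w := hwy.ne'
  have hyx : y ≠ x := hxy.ne'
  have hva : v ≠ a := fun h => hav' h.symm
  have hwa : w ≠ a := fun h => haw h.symm
  have hxa : x ≠ a := fun h => hax h.symm
  have hya : y ≠ a := fun h => hay h.symm
  have hvb : v ≠ b := fun h => hbv h.symm
  have hwb : w ≠ b := fun h => hbw h.symm
  have hxb : x ≠ b := fun h => hbx h.symm
  have hyb : y ≠ b := fun h => hby' h.symm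
  have hba : b ≠ a := hab.symm
  have A'v : ∀ z, G'.Adj v z ↔ (z = w ∨ z = x ∨ z = y) := by
    intro z; rw [hadj, Av]
    constructor
    · rintro (⟨hz, h1, h2, h3, h4⟩ | (⟨_, rfl⟩ | ⟨h, _⟩) | (⟨h, _⟩ | ⟨h, _⟩))
      · rcases hz with rfl | rfl | rfl
        · exact Or.inl rfl
        · exact Or.inr (Or.inl rfl)
        · exact absurd ⟨rfl, rfl⟩ h2
      · exact Or.inr (Or.inr rfl)
      · exact absurd h hvy'
      · exact absurd h hva
      · exact absurd h hvb
    · rintro (rfl | rfl | rfl)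
      · exact Or.inl ⟨Or.inl rfl, fun h => hva h.1, fun h => hwa h.2,
          fun h => hvb h.1, fun h => hvy' h.1⟩
      · exact Or.inl ⟨Or.inr (Or.inl rfl), fun h => hva h.1, fun h => hxa h.2,
          fun h => hvb h.1, fun h => hvy' h.1⟩
      · exact Or.inr (Or.inl (Or.inl ⟨rfl, rfl⟩))
  have A'y : ∀ z, G'.Adj y z ↔ (z = w ∨ z = x ∨ z = v) := by
    intro z; rw [hadj, Ay]
    constructor
    · rintro (⟨hz, h1, h2, h3, h4⟩ | (⟨h, _⟩ | ⟨_, rfl⟩) | (⟨h, _⟩ | ⟨h, _⟩))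
      · rcases hz with rfl | rfl | rfl
        · exact Or.inl rfl
        · exact Or.inr (Or.inl rfl)
        · exact absurd ⟨rfl, rfl⟩ h4
      · exact absurd h hyv
      · exact Or.inr (Or.inr rfl)
      · exact absurd h hya
      · exact absurd h hyb
    · rintro (rfl | rfl | rfl)
      · exact Or.inl ⟨Or.inl rfl, fun h => hya h.1, fun h => hyv h.1,
          fun h => hyb h.1, fun h => hwb h.2⟩
      · exact Or.inl ⟨Or.inr (Or.inl rfl), fun h => hya h.1, fun h => hyv h.1,
          fun h => hyb h.1, fun h => hxb h.2⟩
      · exact Or.inr (Or.inl (Or.inr ⟨rfl, rfl⟩))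
  have A'w : ∀ z, G'.Adj w z ↔ (z = v ∨ z = x ∨ z = y) := by
    intro z; rw [hadj, Aw]
    constructor
    · rintro (⟨hz, _, _, _, _⟩ | (⟨h, _⟩ | ⟨h, _⟩) | (⟨h, _⟩ | ⟨h, _⟩))
      · exact hz
      · exact absurd h hwv
      · exact absurd h hwy.ne
      · exact absurd h hwa
      · exact absurd h hwb
    · intro hz
      refine Or.inl ⟨hz, ?_, ?_, ?_, ?_⟩ <;> rintro ⟨h, h'⟩
      · exact hwa h
      · exact hwv h
      · exact hwb h
      · exact hwy.ne h
  have A'x : ∀ z, G'.Adj x z ↔ (z = v ∨ z = w ∨ z = y) := by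
    intro z; rw [hadj, Ax]
    constructor
    · rintro (⟨hz, _, _, _, _⟩ | (⟨h, _⟩ | ⟨h, _⟩) | (⟨h, _⟩ | ⟨h, _⟩))
      · exact hz
      · exact absurd h hxv
      · exact absurd h hxy.ne
      · exact absurd h hxa
      · exact absurd h hxb
    · intro hz
      refine Or.inl ⟨hz, ?_, ?_, ?_, ?_⟩ <;> rintro ⟨h, h'⟩
      · exact hxa h
      · exact hxv h
      · exact hxb h
      · exact hxy.ne h
  have A'a : ∀ z, G'.Adj a z ↔ ((G.Adj a z ∧ z ≠ v) ∨ z = b) := by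
    intro z; rw [hadj]
    constructor
    · rintro (h | (⟨h1, _⟩ | ⟨h1, _⟩) | (⟨_, rfl⟩ | ⟨h1, _⟩))
      · exact Or.inl ⟨h.1, fun hz => h.2.1 ⟨rfl, hz⟩⟩
      · exact absurd h1 hav'
      · exact absurd h1 hay
      · exact Or.inr rfl
      · exact absurd h1 hab
    · rintro (⟨h1, h2⟩ | rfl)
      · refine Or.inl ⟨h1, ?_, ?_, ?_, ?_⟩ <;> rintro ⟨h3, h4⟩
        · exact h2 h4
        · exact hav' h3
        · exact hab h3
        · exact hay h3
      · exact Or.inr (Or.inr (Or.inl ⟨rfl, rfl⟩))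
  have A'b : ∀ z, G'.Adj b z ↔ ((G.Adj b z ∧ z ≠ y) ∨ z = a) := by
    intro z; rw [hadj]
    constructor
    · rintro (h | (⟨h1, _⟩ | ⟨h1, _⟩) | (⟨h1, _⟩ | ⟨_, rfl⟩))
      · exact Or.inl ⟨h.1, fun hz => h.2.2.2.1 ⟨rfl, hz⟩⟩
      · exact absurd h1 hbv
      · exact absurd h1 hby'
      · exact absurd h1 hba
      · exact Or.inr rfl
    · rintro (⟨h1, h2⟩ | rfl)
      · refine Or.inl ⟨h1, ?_, ?_, ?_, ?_⟩ <;> rintro ⟨h3, h4⟩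
        · exact hba h3
        · exact hbv h3
        · exact h2 h4
        · exact hby' h3
      · exact Or.inr (Or.inr (Or.inr ⟨rfl, rfl⟩))
  have ncard3 : ∀ p q r : Fin n, p ≠ q → p ≠ r → q ≠ r →
      ({p, q, r} : Set (Fin n)).ncard = 3 := by
    intro p q r h1 h2 h3
    rw [Set.ncard_insert_of_notMem (by simp [h1, h2]), Set.ncard_pair h3]
  constructor
  · intro u
    by_cases huv : u = v
    · subst huv
      have : G'.neighborSet u = {w, x, y} := Set.ext fun z => by
        rw [SimpleGraph.mem_neighborSet, A'v]; simp
      rw [this]; exact ncard3 _ _ _ hwx.ne hwy.ne hxy.ne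
    by_cases huw : u = w
    · subst huw
      have : G'.neighborSet u = {v, x, y} := Set.ext fun z => by
        rw [SimpleGraph.mem_neighborSet, A'w]; simp
      rw [this]; exact ncard3 _ _ _ hvx.ne hvy' hxy.ne
    by_cases hux : u = x
    · subst hux
      have : G'.neighborSet u = {v, w, y} := Set.ext fun z => by
        rw [SimpleGraph.mem_neighborSet, A'x]; simp
      rw [this]; exact ncard3 _ _ _ hvw.ne hvy' hwy.ne
    by_cases huy : u = y
    · subst huy
      have : G'.neighborSet u = {w, x, v} := Set.ext fun z => by
        rw [SimpleGraph.mem_neighborSet, A'y]; simp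
      rw [this]; exact ncard3 _ _ _ hwx.ne hwv hxv
    by_cases hua : u = a
    · subst hua
      have hset : G'.neighborSet u = insert b (G.neighborSet u \ {v}) := Set.ext fun z => by
        rw [SimpleGraph.mem_neighborSet, A'a]
        simp only [Set.mem_insert_iff, Set.mem_diff, Set.mem_singleton_iff,
          SimpleGraph.mem_neighborSet]
        tauto
      have hbmem : b ∉ G.neighborSet u \ {v} := by
        intro hmem
        exact hnab hmem.1
      have hvmem : v ∈ G.neighborSet u := hav.symm
      rw [hset, Set.ncard_insert_of_notMem hbmem,
        Set.ncard_diff_singleton_of_mem hvmem, hreg]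
    by_cases hub : u = b
    · subst hub
      have hset : G'.neighborSet u = insert a (G.neighborSet u \ {y}) := Set.ext fun z => by
        rw [SimpleGraph.mem_neighborSet, A'b]
        simp only [Set.mem_insert_iff, Set.mem_diff, Set.mem_singleton_iff,
          SimpleGraph.mem_neighborSet]
        tauto
      have hamem : a ∉ G.neighborSet u \ {y} := by
        intro hmem
        exact hnab hmem.1.symm
      have hymem : y ∈ G.neighborSet u := hby.symm
      rw [hset, Set.ncard_insert_of_notMem hamem,
        Set.ncard_diff_singleton_of_mem hymem, hreg]
    · have hset : G'.neighborSet u = G.neighborSet u := Set.ext fun z => by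
        rw [SimpleGraph.mem_neighborSet, SimpleGraph.mem_neighborSet, hadj]
        constructor
        · rintro (⟨h, _⟩ | (⟨h, _⟩ | ⟨h, _⟩) | (⟨h, _⟩ | ⟨h, _⟩))
          · exact h
          · exact absurd h huv
          · exact absurd h huy
          · exact absurd h hua
          · exact absurd h hub
        · intro h
          refine Or.inl ⟨h, ?_, ?_, ?_, ?_⟩ <;> rintro ⟨h', _⟩
          · exact hua h'
          · exact huv h'
          · exact hub h'
          · exact huy h'
      rw [hset, hreg]
  · intro u z hu
    simp only [Set.mem_insert_iff, Set.mem_singleton_iff] at hu ⊢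
    rcases hu with rfl | rfl | rfl | rfl
    · rw [A'v]
      constructor
      · rintro (rfl | rfl | rfl)
        · exact ⟨Or.inr (Or.inl rfl), hwv⟩
        · exact ⟨Or.inr (Or.inr (Or.inl rfl)), hxv⟩
        · exact ⟨Or.inr (Or.inr (Or.inr rfl)), hyv⟩
      · rintro ⟨rfl | rfl | rfl | rfl, hne⟩
        · exact absurd rfl hne
        · exact Or.inl rfl
        · exact Or.inr (Or.inl rfl)
        · exact Or.inr (Or.inr rfl)
    · rw [A'w]
      constructor
      · rintro (rfl | rfl | rfl)
        · exact ⟨Or.inl rfl, hvw.ne⟩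
        · exact ⟨Or.inr (Or.inr (Or.inl rfl)), hxw⟩
        · exact ⟨Or.inr (Or.inr (Or.inr rfl)), hyw⟩
      · rintro ⟨rfl | rfl | rfl | rfl, hne⟩
        · exact Or.inl rfl
        · exact absurd rfl hne
        · exact Or.inr (Or.inl rfl)
        · exact Or.inr (Or.inr rfl)
    · rw [A'x]
      constructor
      · rintro (rfl | rfl | rfl)
        · exact ⟨Or.inl rfl, hvx.ne⟩
        · exact ⟨Or.inr (Or.inl rfl), hwx.ne⟩
        · exact ⟨Or.inr (Or.inr (Or.inr rfl)), hyx⟩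
      · rintro ⟨rfl | rfl | rfl | rfl, hne⟩
        · exact Or.inl rfl
        · exact Or.inr (Or.inl rfl)
        · exact absurd rfl hne
        · exact Or.inr (Or.inr rfl)
    · rw [A'y]
      constructor
      · rintro (rfl | rfl | rfl)
        · exact ⟨Or.inr (Or.inl rfl), hwy.ne⟩
        · exact ⟨Or.inr (Or.inr (Or.inl rfl)), hxy.ne⟩
        · exact ⟨Or.inl rfl, hvy'⟩
      · rintro ⟨rfl | rfl | rfl | rfl, hne⟩
        · exact Or.inr (Or.inr rfl)
        · exact Or.inl rfl
        · exact Or.inr (Or.inl rfl)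
        · exact absurd rfl hne
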